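/- Let n ≥ 2 and let p, q : ℝ → ℝⁿ be differentiable. Then the Sutcliffe matrices built from p(s), q(s) satisfy Tᵢ(s)ᴴ = −Tᵢ(s) for i = 1,2,3 and every s; moreover they satisfy Nahm's equations dT₁/ds = [T₂,T₃], dT₂/ds = [T₃,T₁], dT₃/ds = [T₁,T₂] at s if and only if the affine Toda equations hold at s: for every index i (mod n), q̇ᵢ − q̇_{i+1} = pᵢ − p_{i+1} and ṗᵢ = exp(qᵢ − q_{i+1}) − exp(q_{i−1} − qᵢ). -/

import Mathlib

open Matrix Complex

attribute [local instance] Matrix.normedAddCommGroup Matrix.normedSpace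

/-- The Sutcliffe matrix `T₁+iT₂`: entries `exp((qᵢ − q_{i+1})/2)` on the cyclic
superdiagonal `j = i+1 (mod n)` and `0` elsewhere. -/
noncomputable def sutTplus (n : ℕ) [NeZero n] (q : Fin n → ℝ) :
    Matrix (Fin n) (Fin n) ℂ :=
  Matrix.of fun i j => if j = i + 1 then (Real.exp ((q i - q (i + 1)) / 2) : ℂ) else 0

/-- The Sutcliffe matrix `T₁−iT₂ = −(T₁+iT₂)ᵀ`. -/
noncomputable def sutTminus (n : ℕ) [NeZero n] (q : Fin n → ℝ) :
    Matrix (Fin n) (Fin n) ℂ :=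
  -(sutTplus n q)ᵀ

/-- The Sutcliffe matrix `T₁ = ((T₁+iT₂) + (T₁−iT₂))/2`. -/
noncomputable def sutT1 (n : ℕ) [NeZero n] (q : Fin n → ℝ) :
    Matrix (Fin n) (Fin n) ℂ :=
  (1 / 2 : ℂ) • (sutTplus n q + sutTminus n q)

/-- The Sutcliffe matrix `T₂ = ((T₁+iT₂) − (T₁−iT₂))/(2i)`. -/
noncomputable def sutT2 (n : ℕ) [NeZero n] (q : Fin n → ℝ) :
    Matrix (Fin n) (Fin n) ℂ :=
  (1 / (2 * Complex.I) : ℂ) • (sutTplus n q - sutTminus n q)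

/-- The Sutcliffe matrix `T₃ = −(i/2)·diag(p₁,…,pₙ)`. -/
noncomputable def sutT3 (n : ℕ) [NeZero n] (p : Fin n → ℝ) :
    Matrix (Fin n) (Fin n) ℂ :=
  (-(Complex.I / 2)) • Matrix.diagonal fun i => (p i : ℂ)

section Aux

attribute [local instance] Matrix.normedAddCommGroup Matrix.normedSpace

lemma sut_hasDerivAt_matrix {n : ℕ} {f : ℝ → Matrix (Fin n) (Fin n) ℂ}
    {f' : Matrix (Fin n) (Fin n) ℂ} {s : ℝ} :
    HasDerivAt f f' s ↔ ∀ i j, HasDerivAt (fun t => f t i j) (f' i j) s := by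
  refine (hasDerivAt_pi (φ := (f : ℝ → Fin n → Fin n → ℂ))).trans ?_
  exact forall_congr' fun i => hasDerivAt_pi

noncomputable def sutDplus (n : ℕ) [NeZero n] (q q' : Fin n → ℝ) :
    Matrix (Fin n) (Fin n) ℂ :=
  Matrix.of fun i j => if j = i + 1 then
    ((Real.exp ((q i - q (i + 1)) / 2) * ((q' i - q' (i + 1)) / 2) : ℝ) : ℂ) else 0

lemma hasDerivAt_sutTplus (n : ℕ) [NeZero n] (q q' : ℝ → Fin n → ℝ)
    (hq : ∀ (i : Fin n) (s : ℝ), HasDerivAt (fun t => q t i) (q' s i) s) (s : ℝ) :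
    HasDerivAt (fun t => sutTplus n (q t)) (sutDplus n (q s) (q' s)) s := by
  rw [sut_hasDerivAt_matrix]
  intro i j
  simp only [sutTplus, sutDplus, Matrix.of_apply]
  split_ifs with h
  · exact (((((hq i s).sub (hq (i+1) s)).div_const 2).exp)).ofReal_comp
  · exact hasDerivAt_const _ _

lemma HasDerivAt.sutMatTranspose {n : ℕ} {f : ℝ → Matrix (Fin n) (Fin n) ℂ}
    {f' : Matrix (Fin n) (Fin n) ℂ} {s : ℝ} (h : HasDerivAt f f' s) :
    HasDerivAt (fun t => (f t)ᵀ) f'ᵀ s := by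
  rw [sut_hasDerivAt_matrix] at h ⊢
  exact fun i j => h j i

lemma hasDerivAt_sutT1 (n : ℕ) [NeZero n] (q q' : ℝ → Fin n → ℝ)
    (hq : ∀ (i : Fin n) (s : ℝ), HasDerivAt (fun t => q t i) (q' s i) s) (s : ℝ) :
    HasDerivAt (fun t => sutT1 n (q t))
      ((1 / 2 : ℂ) • (sutDplus n (q s) (q' s) + -(sutDplus n (q s) (q' s))ᵀ)) s := by
  simp only [sutT1, sutTminus]
  exact (((hasDerivAt_sutTplus n q q' hq s).add
    (hasDerivAt_sutTplus n q q' hq s).sutMatTranspose.neg).const_smul (1 / 2 : ℂ))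

lemma hasDerivAt_sutT2 (n : ℕ) [NeZero n] (q q' : ℝ → Fin n → ℝ)
    (hq : ∀ (i : Fin n) (s : ℝ), HasDerivAt (fun t => q t i) (q' s i) s) (s : ℝ) :
    HasDerivAt (fun t => sutT2 n (q t))
      ((1 / (2 * Complex.I) : ℂ) •
        (sutDplus n (q s) (q' s) - -(sutDplus n (q s) (q' s))ᵀ)) s := by
  simp only [sutT2, sutTminus]
  exact (((hasDerivAt_sutTplus n q q' hq s).sub
    (hasDerivAt_sutTplus n q q' hq s).sutMatTranspose.neg).const_smul (1 / (2 * Complex.I) : ℂ))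

lemma hasDerivAt_sutT3 (n : ℕ) [NeZero n] (p p' : ℝ → Fin n → ℝ)
    (hp : ∀ (i : Fin n) (s : ℝ), HasDerivAt (fun t => p t i) (p' s i) s) (s : ℝ) :
    HasDerivAt (fun t => sutT3 n (p t))
      ((-(Complex.I / 2)) • Matrix.diagonal fun i => (p' s i : ℂ)) s := by
  simp only [sutT3]
  refine HasDerivAt.const_smul (-(Complex.I / 2)) ?_
  refine sut_hasDerivAt_matrix.2 ?_
  intro i j
  rcases eq_or_ne i j with h | h
  · subst h
    simpa [Matrix.diagonal_apply_eq] using (hp i s).ofReal_comp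
  · simpa [Matrix.diagonal_apply_ne _ h] using hasDerivAt_const s (0:ℂ)

lemma sut_skew1 (n : ℕ) [NeZero n] (q : Fin n → ℝ) : (sutT1 n q)ᴴ = -sutT1 n q := by
  ext i j
  simp only [sutT1, sutTminus, sutTplus, Matrix.conjTranspose_apply, Matrix.smul_apply,
    Matrix.add_apply, Matrix.neg_apply, Matrix.transpose_apply, Matrix.of_apply, smul_eq_mul]
  split_ifs <;>
    simp only [star_add, star_mul', star_zero, star_neg, Complex.star_def, map_div₀,
      _root_.map_one, _root_.map_neg, map_ofNat, Complex.conj_ofReal, Complex.conj_I, neg_zero,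
      mul_zero, zero_mul, add_zero, zero_add, neg_neg] <;> ring

lemma sut_skew2 (n : ℕ) [NeZero n] (q : Fin n → ℝ) : (sutT2 n q)ᴴ = -sutT2 n q := by
  ext i j
  simp only [sutT2, sutTminus, sutTplus, Matrix.conjTranspose_apply, Matrix.smul_apply,
    Matrix.sub_apply, Matrix.neg_apply, Matrix.transpose_apply, Matrix.of_apply, smul_eq_mul]
  split_ifs <;>
    simp only [star_add, star_sub, star_mul', star_zero, star_neg, star_inv₀, Complex.star_def,
      _root_.map_mul, map_div₀, _root_.map_one, _root_.map_neg, map_ofNat, Complex.conj_ofReal,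
      Complex.conj_I, neg_zero, mul_zero, zero_mul, add_zero, zero_add, sub_zero, zero_sub,
      neg_neg, inv_neg] <;> ring

lemma sut_skew3 (n : ℕ) [NeZero n] (p : Fin n → ℝ) : (sutT3 n p)ᴴ = -sutT3 n p := by
  ext i j
  simp only [sutT3, Matrix.conjTranspose_apply, Matrix.smul_apply, smul_eq_mul,
    Matrix.neg_apply, Matrix.diagonal_apply]
  rcases eq_or_ne i j with h | h
  · subst h
    simp only [if_pos rfl, star_mul', Complex.star_def, _root_.map_neg, map_div₀, map_ofNat,
      Complex.conj_I, Complex.conj_ofReal, ite_true]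
    ring
  · simp [h, Ne.symm h]

lemma sut_PPt (n : ℕ) [NeZero n] (q : Fin n → ℝ) :
    sutTplus n q * (sutTplus n q)ᵀ =
      Matrix.diagonal fun i => (Real.exp (q i - q (i + 1)) : ℂ) := by
  ext i j
  simp only [Matrix.mul_apply, sutTplus, Matrix.transpose_apply, Matrix.of_apply,
    ite_mul, zero_mul, mul_ite, mul_zero]
  rw [Finset.sum_ite_eq' Finset.univ (j+1)]
  simp only [Finset.mem_univ, if_true]
  rcases eq_or_ne i j with h | h
  · subst h
    simp only [if_pos rfl, Matrix.diagonal_apply_eq, ← Complex.ofReal_mul, ← Real.exp_add]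
    norm_num
  · have : (j + 1 : Fin n) ≠ i + 1 := fun hc => h (by simpa using hc.symm)
    simp [Matrix.diagonal_apply_ne _ h, if_neg this, Ne.symm h]

lemma sut_PtP (n : ℕ) [NeZero n] (q : Fin n → ℝ) :
    (sutTplus n q)ᵀ * sutTplus n q =
      Matrix.diagonal fun i => (Real.exp (q (i - 1) - q i) : ℂ) := by
  ext i j
  simp only [Matrix.mul_apply, sutTplus, Matrix.transpose_apply, Matrix.of_apply,
    ite_mul, zero_mul, mul_ite, mul_zero]
  have hk : ∀ m k : Fin n, (m = k + 1) ↔ (k = m - 1) := by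
    intro m k; constructor <;> intro h <;> simp [h, sub_add_cancel]
  simp only [hk]
  rw [Finset.sum_ite_eq' Finset.univ (j-1)]
  simp only [Finset.mem_univ, if_true]
  rcases eq_or_ne i j with h | h
  · subst h
    simp only [if_pos rfl, Matrix.diagonal_apply_eq, ← Complex.ofReal_mul, ← Real.exp_add,
      sub_add_cancel]
    norm_num
  · have : (j - 1 : Fin n) ≠ i - 1 := fun hc => h (by
      have := congrArg (· + 1) hc; simpa [sub_add_cancel] using this.symm)
    simp [Matrix.diagonal_apply_ne _ h, if_neg this, Ne.symm h]

lemma sut_comm23_eq (n : ℕ) [NeZero n] (p q : Fin n → ℝ) :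
    sutT2 n q * sutT3 n p - sutT3 n p * sutT2 n q =
      Matrix.of fun i j => (-(1/4) : ℂ) * ((p j : ℂ) - p i) *
        ((if j = i + 1 then (Real.exp ((q i - q (i + 1)) / 2) : ℂ) else 0) +
         (if i = j + 1 then (Real.exp ((q j - q (j + 1)) / 2) : ℂ) else 0)) := by
  ext i j
  simp only [sutT2, sutT3, sutTminus, sutTplus, Matrix.sub_apply, Matrix.smul_mul,
    Matrix.mul_smul, Matrix.smul_apply, Matrix.mul_diagonal, Matrix.diagonal_mul,
    Matrix.sub_apply, Matrix.neg_apply, Matrix.transpose_apply, Matrix.of_apply,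
    smul_eq_mul, sub_neg_eq_add, Matrix.add_apply, one_div, mul_inv, Complex.inv_I]
  ring_nf
  simp only [Complex.I_sq]
  ring

lemma sut_comm31_eq (n : ℕ) [NeZero n] (p q : Fin n → ℝ) :
    sutT3 n p * sutT1 n q - sutT1 n q * sutT3 n p =
      Matrix.of fun i j => (-(Complex.I/4) : ℂ) * ((p i : ℂ) - p j) *
        ((if j = i + 1 then (Real.exp ((q i - q (i + 1)) / 2) : ℂ) else 0) -
         (if i = j + 1 then (Real.exp ((q j - q (j + 1)) / 2) : ℂ) else 0)) := by
  ext i j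
  simp only [sutT1, sutT3, sutTminus, sutTplus, Matrix.sub_apply, Matrix.smul_mul,
    Matrix.mul_smul, Matrix.smul_apply, Matrix.mul_diagonal, Matrix.diagonal_mul,
    Matrix.neg_apply, Matrix.transpose_apply, Matrix.of_apply,
    smul_eq_mul, Matrix.add_apply, one_div]
  ring

lemma sut_comm12_eq (n : ℕ) [NeZero n] (q : Fin n → ℝ) :
    sutT1 n q * sutT2 n q - sutT2 n q * sutT1 n q =
      (-(Complex.I/2)) • Matrix.diagonal fun i =>
        ((Real.exp (q i - q (i + 1)) : ℂ) - (Real.exp (q (i - 1) - q i) : ℂ)) := by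
  have key : sutT1 n q * sutT2 n q - sutT2 n q * sutT1 n q
      = (1 / (2 * Complex.I) : ℂ) •
        (sutTplus n q * (sutTplus n q)ᵀ - (sutTplus n q)ᵀ * sutTplus n q) := by
    simp only [sutT1, sutT2, sutTminus, Matrix.smul_mul, Matrix.mul_smul, smul_smul,
      sub_neg_eq_add]
    rw [mul_comm ((1:ℂ) / (2 * Complex.I)), ← smul_sub]
    have expand : (sutTplus n q + -(sutTplus n q)ᵀ) * (sutTplus n q + (sutTplus n q)ᵀ) -
        (sutTplus n q + (sutTplus n q)ᵀ) * (sutTplus n q + -(sutTplus n q)ᵀ)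
        = (sutTplus n q * (sutTplus n q)ᵀ - (sutTplus n q)ᵀ * sutTplus n q) +
          (sutTplus n q * (sutTplus n q)ᵀ - (sutTplus n q)ᵀ * sutTplus n q) := by
      noncomm_ring
    rw [expand, smul_add, ← add_smul]
    congr 1
    ring
  rw [key, sut_PPt, sut_PtP, ← Matrix.diagonal_sub]
  congr 1
  rw [one_div, mul_inv, Complex.inv_I]
  ring

end Aux

/-- The Sutcliffe matrices built from differentiable `p, q : ℝ → ℝⁿ` are skew-Hermitian,
and they satisfy Nahm's equations at `s` iff the affine Toda equations hold at `s`. -/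
theorem stmt6 (n : ℕ) [NeZero n] (hn : 2 ≤ n)
    (p q p' q' : ℝ → Fin n → ℝ)
    (hp : ∀ (i : Fin n) (s : ℝ), HasDerivAt (fun t => p t i) (p' s i) s)
    (hq : ∀ (i : Fin n) (s : ℝ), HasDerivAt (fun t => q t i) (q' s i) s) :
    (∀ s : ℝ,
      (sutT1 n (q s))ᴴ = -sutT1 n (q s) ∧
      (sutT2 n (q s))ᴴ = -sutT2 n (q s) ∧
      (sutT3 n (p s))ᴴ = -sutT3 n (p s)) ∧
    (∀ s : ℝ,
      (HasDerivAt (fun t => sutT1 n (q t))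
          (sutT2 n (q s) * sutT3 n (p s) - sutT3 n (p s) * sutT2 n (q s)) s ∧
       HasDerivAt (fun t => sutT2 n (q t))
          (sutT3 n (p s) * sutT1 n (q s) - sutT1 n (q s) * sutT3 n (p s)) s ∧
       HasDerivAt (fun t => sutT3 n (p t))
          (sutT1 n (q s) * sutT2 n (q s) - sutT2 n (q s) * sutT1 n (q s)) s) ↔
      (∀ i : Fin n,
        q' s i - q' s (i + 1) = p s i - p s (i + 1) ∧
        p' s i = Real.exp (q s i - q s (i + 1)) - Real.exp (q s (i - 1) - q s i))) := by
  refine ⟨fun s => ⟨sut_skew1 n (q s), sut_skew2 n (q s), sut_skew3 n (p s)⟩, fun s => ?_⟩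
  constructor
  · rintro ⟨h1, -, h3⟩ i
    have e1 := h1.unique (hasDerivAt_sutT1 n q q' hq s)
    have e3 := h3.unique (hasDerivAt_sutT3 n p p' hp s)
    constructor
    · have eC : (sutT2 n (q s) * sutT3 n (p s) - sutT3 n (p s) * sutT2 n (q s)) i (i+1)
          = ((1 / 2 : ℂ) • (sutDplus n (q s) (q' s) + -(sutDplus n (q s) (q' s))ᵀ)) i (i+1) := by
        rw [e1]
      rw [sut_comm23_eq] at eC
      simp only [sutDplus, Matrix.of_apply, Matrix.smul_apply, Matrix.add_apply,
        Matrix.neg_apply, Matrix.transpose_apply, smul_eq_mul, if_true] at eC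
      rw [show (-(1/4) : ℂ) = ((-(1/4) : ℝ) : ℂ) from by norm_num,
        show ((1:ℂ)/2) = (((1:ℝ)/2 : ℝ) : ℂ) from by norm_num] at eC
      by_cases hc : i = i + 1 + 1
      · rw [if_pos hc, if_pos hc, ← hc] at eC
        have eR : (-(1/4) : ℝ) * ((p s (i+1)) - p s i) *
              (Real.exp ((q s i - q s (i+1))/2) + Real.exp ((q s (i+1) - q s i)/2))
            = 1/2 * (Real.exp ((q s i - q s (i+1))/2) * ((q' s i - q' s (i+1))/2) +
              -(Real.exp ((q s (i+1) - q s i)/2) * ((q' s (i+1) - q' s i)/2))) := by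
          exact_mod_cast eC
        have hpos : (0:ℝ) < Real.exp ((q s i - q s (i+1))/2) + Real.exp ((q s (i+1) - q s i)/2) :=
          add_pos (Real.exp_pos _) (Real.exp_pos _)
        refine mul_right_cancel₀ (ne_of_gt hpos) ?_
        linear_combination (-4 : ℝ) * eR
      · rw [if_neg hc, if_neg hc] at eC
        simp only [add_zero, neg_zero] at eC
        have eR : (-(1/4) : ℝ) * ((p s (i+1)) - p s i) * Real.exp ((q s i - q s (i+1))/2)
            = 1/2 * (Real.exp ((q s i - q s (i+1))/2) * ((q' s i - q' s (i+1))/2)) := by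
          exact_mod_cast eC
        have hpos : (0:ℝ) < Real.exp ((q s i - q s (i+1))/2) := Real.exp_pos _
        refine mul_right_cancel₀ (ne_of_gt hpos) ?_
        linear_combination (-4 : ℝ) * eR
    · have eC : (sutT1 n (q s) * sutT2 n (q s) - sutT2 n (q s) * sutT1 n (q s)) i i
          = ((-(Complex.I / 2)) • Matrix.diagonal fun k => (p' s k : ℂ)) i i := by
        rw [e3]
      rw [sut_comm12_eq] at eC
      simp only [Matrix.smul_apply, Matrix.diagonal_apply_eq, smul_eq_mul] at eC
      have hI : (-(Complex.I/2) : ℂ) ≠ 0 := by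
        simp [Complex.I_ne_zero]
      have := mul_left_cancel₀ hI eC
      exact_mod_cast this.symm
  · intro hT
    have hm1 : sutT2 n (q s) * sutT3 n (p s) - sutT3 n (p s) * sutT2 n (q s)
        = (1 / 2 : ℂ) • (sutDplus n (q s) (q' s) + -(sutDplus n (q s) (q' s))ᵀ) := by
      rw [sut_comm23_eq]
      ext i j
      simp only [sutDplus, Matrix.of_apply, Matrix.smul_apply, Matrix.add_apply,
        Matrix.neg_apply, Matrix.transpose_apply, smul_eq_mul]
      by_cases h1 : j = i + 1
      · subst h1
        rw [if_pos rfl, if_pos rfl]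
        have t0 := (hT i).1
        have t0' : ((q' s i : ℂ) - q' s (i+1)) = (p s i : ℂ) - p s (i+1) := by
          exact_mod_cast congrArg Complex.ofReal t0
        by_cases hc : i = i + 1 + 1
        · rw [if_pos hc, if_pos hc, ← hc]
          have t1 := (hT (i+1)).1
          rw [← hc] at t1
          have t1' : ((q' s (i+1) : ℂ) - q' s i) = (p s (i+1) : ℂ) - p s i := by
            exact_mod_cast congrArg Complex.ofReal t1
          push_cast
          linear_combination (-(1/4) * Complex.exp (((q s i : ℂ) - (q s (i+1) : ℂ)) / 2)) * t0'
            + ((1/4) * Complex.exp (((q s (i+1) : ℂ) - (q s i : ℂ)) / 2)) * t1'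
        · rw [if_neg hc, if_neg hc]
          push_cast
          linear_combination (-(1/4) * Complex.exp (((q s i : ℂ) - (q s (i+1) : ℂ)) / 2)) * t0'
      · rw [if_neg h1, if_neg h1]
        by_cases h2 : i = j + 1
        · subst h2
          rw [if_pos rfl, if_pos rfl]
          have t0 := (hT j).1
          have t0' : ((q' s j : ℂ) - q' s (j+1)) = (p s j : ℂ) - p s (j+1) := by
            exact_mod_cast congrArg Complex.ofReal t0
          push_cast
          linear_combination ((1/4) * Complex.exp (((q s j : ℂ) - (q s (j+1) : ℂ)) / 2)) * t0'
        · rw [if_neg h2, if_neg h2]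
          ring
    have hm2 : sutT3 n (p s) * sutT1 n (q s) - sutT1 n (q s) * sutT3 n (p s)
        = (1 / (2 * Complex.I) : ℂ) •
          (sutDplus n (q s) (q' s) - -(sutDplus n (q s) (q' s))ᵀ) := by
      rw [sut_comm31_eq]
      ext i j
      simp only [sutDplus, Matrix.of_apply, Matrix.smul_apply, Matrix.sub_apply,
        Matrix.add_apply, Matrix.neg_apply, Matrix.transpose_apply, smul_eq_mul,
        sub_neg_eq_add, one_div, mul_inv, Complex.inv_I]
      by_cases h1 : j = i + 1
      · subst h1
        rw [if_pos rfl, if_pos rfl]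
        have t0 := (hT i).1
        have t0' : ((q' s i : ℂ) - q' s (i+1)) = (p s i : ℂ) - p s (i+1) := by
          exact_mod_cast congrArg Complex.ofReal t0
        by_cases hc : i = i + 1 + 1
        · rw [if_pos hc, if_pos hc, ← hc]
          have t1 := (hT (i+1)).1
          rw [← hc] at t1
          have t1' : ((q' s (i+1) : ℂ) - q' s i) = (p s (i+1) : ℂ) - p s i := by
            exact_mod_cast congrArg Complex.ofReal t1
          push_cast
          linear_combination ((Complex.I/4) * Complex.exp (((q s i : ℂ) - (q s (i+1) : ℂ)) / 2)) * t0'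
            + ((Complex.I/4) * Complex.exp (((q s (i+1) : ℂ) - (q s i : ℂ)) / 2)) * t1'
        · rw [if_neg hc, if_neg hc]
          push_cast
          linear_combination ((Complex.I/4) * Complex.exp (((q s i : ℂ) - (q s (i+1) : ℂ)) / 2)) * t0'
      · rw [if_neg h1, if_neg h1]
        by_cases h2 : i = j + 1
        · subst h2
          rw [if_pos rfl, if_pos rfl]
          have t0 := (hT j).1
          have t0' : ((q' s j : ℂ) - q' s (j+1)) = (p s j : ℂ) - p s (j+1) := by
            exact_mod_cast congrArg Complex.ofReal t0
          push_cast
          linear_combination ((Complex.I/4) * Complex.exp (((q s j : ℂ) - (q s (j+1) : ℂ)) / 2)) * t0'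
        · rw [if_neg h2, if_neg h2]
          ring
    have hm3 : sutT1 n (q s) * sutT2 n (q s) - sutT2 n (q s) * sutT1 n (q s)
        = (-(Complex.I / 2)) • Matrix.diagonal fun k => (p' s k : ℂ) := by
      rw [sut_comm12_eq]
      congr 1
      exact congrArg Matrix.diagonal (funext fun k => by
        exact_mod_cast (congrArg Complex.ofReal (hT k).2).symm)
    refine ⟨?_, ?_, ?_⟩
    · rw [hm1]; exact hasDerivAt_sutT1 n q q' hq s
    · rw [hm2]; exact hasDerivAt_sutT2 n q q' hq s
    · rw [hm3]; exact hasDerivAt_sutT3 n p p' hp s
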